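/- Let q be a prime power with q ≥ 4 and let P be a closed point of degree 3 of P² over F_q not contained in any F_q-rational line, given by a point p ∈ P²(F_{q³}) whose Frobenius orbit {p, φ(p), φ²(p)} has exactly 3 elements, these three points being non-collinear. Then for every nonzero homogeneous polynomial f ∈ F_q[x,y,z] of degree 4 vanishing at p, the number of points [a:b:c] ∈ P²(F_q) with f(a,b,c) = 0 is at most 3q + 2. -/

import Mathlib

open MvPolynomial Polynomial

noncomputable section
namespace Stmt13
variable {F : Type} [Field F]

lemma aeval_eq_eval (x : Fin 3 → F) (p : MvPolynomial (Fin 3) F) :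
    MvPolynomial.aeval x p = MvPolynomial.eval x p := by
  rw [MvPolynomial.aeval_def, MvPolynomial.eval]
  simp [MvPolynomial.eval₂Hom]

lemma monomial_degree_eq {σ : Type} [Fintype σ] {g : MvPolynomial σ F} {d : ℕ}
    (h : g.IsHomogeneous d) {m : σ →₀ ℕ} (hm : m ∈ g.support) : (∑ i, m i) = d := by
  have h1 := h (MvPolynomial.mem_support_iff.mp hm)
  have h2 : ∑ i, m i = Finsupp.weight 1 m := by
    rw [Finsupp.weight_apply, Finsupp.sum_fintype]
    · simp
    · intro i; simp
  rw [h2]; exact h1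

lemma eval_smul {g : MvPolynomial (Fin 3) F} {d : ℕ} (h : g.IsHomogeneous d)
    (c : F) (w : Fin 3 → F) : MvPolynomial.eval (c • w) g = c ^ d * MvPolynomial.eval w g := by
  rw [MvPolynomial.eval_eq', MvPolynomial.eval_eq', Finset.mul_sum]
  apply Finset.sum_congr rfl
  intro m hm
  have hdeg : (∑ i, m i) = d := monomial_degree_eq h hm
  have key : ∏ i, (c • w) i ^ m i = c ^ d * ∏ i, w i ^ m i := by
    have e1 : ∏ i, (c • w) i ^ m i = ∏ i, (c ^ m i * w i ^ m i) := by
      apply Finset.prod_congr rfl; intro i _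
      simp [mul_pow]
    rw [e1, Finset.prod_mul_distrib, Finset.prod_pow_eq_pow_sum, hdeg]
  rw [key]; ring

/-- restriction of `g` to the affine line `t ↦ w + t u` -/
def lineP (w u : Fin 3 → F) (g : MvPolynomial (Fin 3) F) : Polynomial F :=
  MvPolynomial.aeval (fun i => Polynomial.C (w i) + Polynomial.X * Polynomial.C (u i)) g

lemma eval_lineP (w u : Fin 3 → F) (g : MvPolynomial (Fin 3) F) (t : F) :
    (lineP w u g).eval t = MvPolynomial.eval (w + t • u) g := by
  have h := congrArg (fun ψ => ψ g) (MvPolynomial.comp_aeval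
    (fun i => Polynomial.C (w i) + Polynomial.X * Polynomial.C (u i)) (Polynomial.aeval t))
  simp only [AlgHom.comp_apply] at h
  have h2 : (Polynomial.aeval t) (lineP w u g) = (lineP w u g).eval t := by
    rw [Polynomial.aeval_def, Polynomial.eval]
    simp [Polynomial.eval₂]
  have h3 : (fun i => (Polynomial.aeval t) (Polynomial.C (w i) + Polynomial.X * Polynomial.C (u i)))
      = (w + t • u) := by
    funext i
    simp [Pi.add_apply, Pi.smul_apply, smul_eq_mul]
    ring
  rw [← h2, lineP, h, h3, ← aeval_eq_eval]

/-- chain rule -/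
lemma derivative_aeval (φ : Fin 3 → Polynomial F) (g : MvPolynomial (Fin 3) F) :
    Polynomial.derivative (MvPolynomial.aeval φ g)
      = ∑ i, MvPolynomial.aeval φ (pderiv i g) * Polynomial.derivative (φ i) := by
  induction g using MvPolynomial.induction_on with
  | C a => simp
  | add p q hp hq =>
      simp only [map_add, hp, hq, ← Finset.sum_add_distrib]
      apply Finset.sum_congr rfl
      intro i _; ring
  | mul_X p n hp =>
      simp only [map_mul, MvPolynomial.aeval_X, Polynomial.derivative_mul, hp, pderiv_mul,
        map_add, pderiv_X, Finset.sum_mul, add_mul]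
      rw [Finset.sum_add_distrib]
      refine congrArg₂ (· + ·) ?_ ?_
      · apply Finset.sum_congr rfl; intro i _; ring
      · rw [Finset.sum_eq_single n]
        · simp
        · intro i _ hin
          simp [Pi.single_apply, hin]
        · intro h; exact absurd (Finset.mem_univ n) h

/-- directional derivative of `g` at `a` in direction `u` -/
def gdot (g : MvPolynomial (Fin 3) F) (a u : Fin 3 → F) : F :=
  ∑ i, u i * MvPolynomial.eval a (pderiv i g)

lemma deriv_lineP (w u : Fin 3 → F) (g : MvPolynomial (Fin 3) F) (t : F) :
    (Polynomial.derivative (lineP w u g)).eval t = gdot g (w + t • u) u := by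
  rw [lineP, derivative_aeval, Polynomial.eval_finset_sum, gdot]
  apply Finset.sum_congr rfl
  intro i _
  have : Polynomial.derivative (Polynomial.C (w i) + Polynomial.X * Polynomial.C (u i))
      = Polynomial.C (u i) := by simp
  rw [this, Polynomial.eval_mul, Polynomial.eval_C, ← lineP, eval_lineP]
  ring


/-- `g(s w + t u)` as a binary form -/
def binG (w u : Fin 3 → F) (g : MvPolynomial (Fin 3) F) : MvPolynomial (Fin 2) F :=
  MvPolynomial.aeval (fun i => MvPolynomial.C (w i) * MvPolynomial.X 0
    + MvPolynomial.C (u i) * MvPolynomial.X 1) g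

lemma isHomogeneous_aeval {τ : Type} {g : MvPolynomial (Fin 3) F} {d : ℕ}
    (hg : g.IsHomogeneous d) (φ : Fin 3 → MvPolynomial τ F)
    (hφ : ∀ i, (φ i).IsHomogeneous 1) :
    (MvPolynomial.aeval φ g).IsHomogeneous d := by
  conv_lhs => rw [← MvPolynomial.support_sum_monomial_coeff g]
  rw [map_sum]
  apply MvPolynomial.IsHomogeneous.sum
  intro m hm
  rw [MvPolynomial.aeval_monomial]
  have hsum : ∑ i ∈ m.support, m i = d := by
    rw [← monomial_degree_eq hg hm]
    exact Finset.sum_subset (Finset.subset_univ _) (by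
      intro x _ hx
      simpa using Finsupp.notMem_support_iff.mp hx)
  have hprod : (m.prod fun i k => φ i ^ k).IsHomogeneous d := by
    rw [Finsupp.prod, ← hsum]
    exact MvPolynomial.IsHomogeneous.prod _ _ _ (fun i _ => by
      have := (hφ i).pow (m i); rwa [one_mul] at this)
  have := (MvPolynomial.isHomogeneous_C τ (MvPolynomial.coeff m g)).mul hprod
  rw [zero_add] at this
  rw [MvPolynomial.algebraMap_eq]
  exact this

lemma binG_isHomogeneous {g : MvPolynomial (Fin 3) F} {d : ℕ} (hg : g.IsHomogeneous d)
    (w u : Fin 3 → F) : (binG w u g).IsHomogeneous d := by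
  apply isHomogeneous_aeval hg
  intro i
  have h0 : (MvPolynomial.C (w i) * (MvPolynomial.X 0 : MvPolynomial (Fin 2) F)).IsHomogeneous 1 := by
    have := (MvPolynomial.isHomogeneous_C (Fin 2) (w i)).mul (MvPolynomial.isHomogeneous_X F (0 : Fin 2))
    simpa using this
  have h1 : (MvPolynomial.C (u i) * (MvPolynomial.X 1 : MvPolynomial (Fin 2) F)).IsHomogeneous 1 := by
    have := (MvPolynomial.isHomogeneous_C (Fin 2) (u i)).mul (MvPolynomial.isHomogeneous_X F (1 : Fin 2))
    simpa using this
  exact h0.add h1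

lemma coeff_aeval_binG {d : ℕ} (H : MvPolynomial (Fin 2) F) (hH : H.IsHomogeneous d) (j : ℕ) :
    (MvPolynomial.aeval ![(1:Polynomial F), Polynomial.X] H).coeff j
      = if j ≤ d then MvPolynomial.coeff (Finsupp.single 0 (d-j) + Finsupp.single 1 j) H else 0 := by
  conv_lhs => rw [← MvPolynomial.support_sum_monomial_coeff H]
  rw [map_sum, Polynomial.finset_sum_coeff]
  have hterm : ∀ m ∈ H.support,
      ((MvPolynomial.aeval ![(1:Polynomial F), Polynomial.X]) (MvPolynomial.monomial m
        (MvPolynomial.coeff m H))).coeff j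
      = if m 1 = j then MvPolynomial.coeff m H else 0 := by
    intro m hm
    rw [MvPolynomial.aeval_monomial]
    have hpr : (m.prod fun i k => (![(1:Polynomial F), Polynomial.X]) i ^ k)
        = Polynomial.X ^ (m 1) := by
      rw [Finsupp.prod_fintype _ _ (fun i => pow_zero _), Fin.prod_univ_two]
      simp
    rw [hpr]
    simp [Polynomial.coeff_X_pow, eq_comm]
  rw [Finset.sum_congr rfl hterm]
  by_cases hj : j ≤ d
  · rw [if_pos hj]
    have hiff : ∀ m ∈ H.support, (m 1 = j) ↔ (m = Finsupp.single 0 (d-j) + Finsupp.single 1 j) := by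
      intro m hm
      have hsum : m 0 + m 1 = d := by
        have := monomial_degree_eq hH hm
        rwa [Fin.sum_univ_two] at this
      constructor
      · intro h1
        ext i
        fin_cases i <;> simp [Finsupp.single_apply] <;> omega
      · intro h; rw [h]; simp [Finsupp.single_apply]
    calc (∑ m ∈ H.support, if m 1 = j then MvPolynomial.coeff m H else 0)
        = ∑ m ∈ H.support, if m = Finsupp.single 0 (d-j) + Finsupp.single 1 j
            then MvPolynomial.coeff m H else 0 := by
          apply Finset.sum_congr rfl
          intro m hm
          rw [if_congr (hiff m hm) rfl rfl]
      _ = _ := by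
          rw [Finset.sum_ite_eq' H.support]
          split_ifs with hmem
          · rfl
          · exact (MvPolynomial.notMem_support_iff.mp hmem).symm
  · rw [if_neg hj]
    apply Finset.sum_eq_zero
    intro m hm
    have hsum : m 0 + m 1 = d := by
      have := monomial_degree_eq hH hm
      rwa [Fin.sum_univ_two] at this
    rw [if_neg]
    omega

lemma lineP_eq_binG (w u : Fin 3 → F) (g : MvPolynomial (Fin 3) F) :
    lineP w u g = MvPolynomial.aeval ![(1:Polynomial F), Polynomial.X] (binG w u g) := by
  rw [binG]
  have h := congrArg (fun ψ => ψ g) (MvPolynomial.comp_aeval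
    (fun i => MvPolynomial.C (w i) * MvPolynomial.X 0 + MvPolynomial.C (u i) * MvPolynomial.X 1)
    (MvPolynomial.aeval ![(1:Polynomial F), Polynomial.X]))
  simp only [AlgHom.comp_apply] at h
  have hfun : (fun i => (MvPolynomial.aeval ![(1:Polynomial F), Polynomial.X])
      (MvPolynomial.C (w i) * MvPolynomial.X 0 + MvPolynomial.C (u i) * MvPolynomial.X 1))
      = fun i => Polynomial.C (w i) + Polynomial.X * Polynomial.C (u i) := by
    funext i
    simp
    try ring
  rw [h, hfun, lineP]

lemma binG_swap (w u : Fin 3 → F) (g : MvPolynomial (Fin 3) F) :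
    binG u w g = MvPolynomial.rename (Equiv.swap (0:Fin 2) 1) (binG w u g) := by
  rw [binG, binG]
  have h := congrArg (fun ψ => ψ g) (MvPolynomial.comp_aeval
    (fun i => MvPolynomial.C (w i) * MvPolynomial.X 0 + MvPolynomial.C (u i) * MvPolynomial.X 1)
    (MvPolynomial.rename (Equiv.swap (0:Fin 2) 1)))
  simp only [AlgHom.comp_apply] at h
  have hfun : (fun i => (MvPolynomial.rename (Equiv.swap (0:Fin 2) 1))
      (MvPolynomial.C (w i) * MvPolynomial.X 0 + MvPolynomial.C (u i) * MvPolynomial.X 1))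
      = fun i => MvPolynomial.C (u i) * MvPolynomial.X 0 + MvPolynomial.C (w i) * MvPolynomial.X 1 := by
    funext i
    simp [MvPolynomial.rename_C, MvPolynomial.rename_X, Equiv.swap_apply_left,
      Equiv.swap_apply_right]
    ring
  rw [h, hfun]

lemma coeff_lineP_swap {g : MvPolynomial (Fin 3) F} {d : ℕ} (hg : g.IsHomogeneous d)
    (w u : Fin 3 → F) {j : ℕ} (hj : j ≤ d) :
    (lineP w u g).coeff j = (lineP u w g).coeff (d - j) := by
  rw [lineP_eq_binG, lineP_eq_binG,
    coeff_aeval_binG _ (binG_isHomogeneous hg w u) j,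
    coeff_aeval_binG _ (binG_isHomogeneous hg u w) (d-j),
    if_pos hj, if_pos (Nat.sub_le d j)]
  rw [binG_swap w u g]
  have hd : d - (d - j) = j := by omega
  rw [hd]
  have hmap : (Finsupp.single (0:Fin 2) j + Finsupp.single (1:Fin 2) (d-j))
      = Finsupp.mapDomain (Equiv.swap (0:Fin 2) 1) (Finsupp.single 0 (d-j) + Finsupp.single 1 j) := by
    rw [Finsupp.mapDomain_add, Finsupp.mapDomain_single, Finsupp.mapDomain_single,
      Equiv.swap_apply_left, Equiv.swap_apply_right]
    exact (add_comm _ _)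
  rw [hmap, MvPolynomial.coeff_rename_mapDomain _ (Equiv.injective _)]

lemma coeff_lineP_gt {g : MvPolynomial (Fin 3) F} {d : ℕ} (hg : g.IsHomogeneous d)
    (w u : Fin 3 → F) {j : ℕ} (hj : d < j) : (lineP w u g).coeff j = 0 := by
  rw [lineP_eq_binG, coeff_aeval_binG _ (binG_isHomogeneous hg w u) j, if_neg (by omega)]

lemma natDegree_lineP_le {g : MvPolynomial (Fin 3) F} {d : ℕ} (hg : g.IsHomogeneous d)
    (w u : Fin 3 → F) : (lineP w u g).natDegree ≤ d :=
  Polynomial.natDegree_le_iff_coeff_eq_zero.mpr (fun _ hN => coeff_lineP_gt hg w u hN)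

lemma coeff_lineP_top {g : MvPolynomial (Fin 3) F} {d : ℕ} (hg : g.IsHomogeneous d)
    (w u : Fin 3 → F) : (lineP w u g).coeff d = MvPolynomial.eval u g := by
  rw [coeff_lineP_swap hg w u (le_refl d), Nat.sub_self,
    Polynomial.coeff_zero_eq_eval_zero, eval_lineP]
  simp

lemma coeff_lineP_sub1 {g : MvPolynomial (Fin 3) F} {d : ℕ} (hg : g.IsHomogeneous d)
    (hd : 1 ≤ d) (w u : Fin 3 → F) : (lineP w u g).coeff (d-1) = gdot g u w := by
  rw [coeff_lineP_swap hg w u (Nat.sub_le d 1)]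
  have h1 : d - (d - 1) = 1 := by omega
  rw [h1]
  have h2 : (lineP u w g).coeff 1 = (Polynomial.derivative (lineP u w g)).coeff 0 := by
    rw [Polynomial.coeff_derivative]
    simp
  rw [h2, Polynomial.coeff_zero_eq_eval_zero, deriv_lineP]
  simp



lemma simple_root_deriv {h : Polynomial F} {c : F} (h0 : h ≠ 0)
    (h1 : h.rootMultiplicity c = 1) : (Polynomial.derivative h).eval c ≠ 0 := by
  obtain ⟨k, hk⟩ := Polynomial.pow_rootMultiplicity_dvd h c
  rw [h1, pow_one] at hk
  have hkc : k.eval c ≠ 0 := by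
    intro hc
    obtain ⟨k2, hk2⟩ := Polynomial.dvd_iff_isRoot.mpr hc
    have : (Polynomial.X - Polynomial.C c) ^ 2 ∣ h := by
      rw [hk, hk2]; ring_nf; exact Dvd.intro k2 (by ring)
    have := (Polynomial.le_rootMultiplicity_iff h0).mpr this
    omega
  rw [hk]
  simp [Polynomial.derivative_mul, Polynomial.eval_add, Polynomial.eval_mul]
  intro hbad
  exact hkc (by simpa using hbad)

lemma gdot_linear (g : MvPolynomial (Fin 3) F) (a u v : Fin 3 → F) (c : F) :
    gdot g a (u + c • v) = gdot g a u + c * gdot g a v := by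
  rw [gdot, gdot, gdot, Finset.mul_sum, ← Finset.sum_add_distrib]
  apply Finset.sum_congr rfl
  intro i _
  simp [Pi.add_apply, Pi.smul_apply, smul_eq_mul]
  ring

section Geometry
variable [Fintype F] [DecidableEq F]

instance : Finite (Projectivization F (Fin 3 → F)) := Quotient.finite _

/-- the projective zero locus -/
def Zs (g : MvPolynomial (Fin 3) F) : Set (Projectivization F (Fin 3 → F)) :=
  {x | MvPolynomial.eval x.rep g = 0}

omit [Fintype F] [DecidableEq F] in
lemma mem_Zs_iff {g : MvPolynomial (Fin 3) F} {d : ℕ} (hg : g.IsHomogeneous d)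
    {w : Fin 3 → F} (hw : w ≠ 0) :
    Projectivization.mk F w hw ∈ Zs g ↔ MvPolynomial.eval w g = 0 := by
  obtain ⟨a, ha⟩ := (Projectivization.mk_eq_mk_iff F _ _
    (Projectivization.rep_nonzero (Projectivization.mk F w hw)) hw).mp
    (Projectivization.mk_rep (Projectivization.mk F w hw))
  have heq : MvPolynomial.eval (Projectivization.mk F w hw).rep g
      = (a:F)^d * MvPolynomial.eval w g := by
    rw [← ha, Units.smul_def]
    exact eval_smul hg _ _
  rw [Zs, Set.mem_setOf_eq, heq]
  constructor
  · intro h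
    rcases mul_eq_zero.mp h with h | h
    · exact absurd h (pow_ne_zero d (Units.ne_zero a))
    · exact h
  · intro h; rw [h, mul_zero]

/-- no rational line is contained in the zero locus (polynomial form) -/
def NoLine (g : MvPolynomial (Fin 3) F) : Prop :=
  ∀ w u : Fin 3 → F, LinearIndependent F ![w, u] → lineP w u g ≠ 0

variable {b : Fin 3 → (Fin 3 → F)}

omit [Fintype F] [DecidableEq F] in
lemma combo_eq_zero (hb : LinearIndependent F b) {α β γ : F}
    (h : α • b 0 + β • b 1 + γ • b 2 = 0) : α = 0 ∧ β = 0 ∧ γ = 0 := by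
  have h2 := Fintype.linearIndependent_iff.mp hb ![α, β, γ] (by
    rw [Fin.sum_univ_three]
    simpa using h)
  exact ⟨h2 0, h2 1, h2 2⟩

/-- directions of the lines through the base point `b 0` -/
def zvec (b : Fin 3 → (Fin 3 → F)) : Option F → (Fin 3 → F) :=
  fun o => o.elim (b 2) (fun c => b 1 + c • b 2)

omit [Fintype F] [DecidableEq F] in
lemma zvec_add_smul_ne_zero (hb : LinearIndependent F b) (o : Option F) (t : F) :
    zvec b o + t • b 0 ≠ 0 := by
  intro h
  cases o with
  | none =>
      simp only [zvec, Option.elim] at h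
      have h2 : t • b 0 + (0:F) • b 1 + (1:F) • b 2 = 0 := by
        linear_combination (norm := module) h
      exact one_ne_zero (combo_eq_zero hb h2).2.2
  | some c =>
      simp only [zvec, Option.elim] at h
      have h2 : t • b 0 + (1:F) • b 1 + c • b 2 = 0 := by
        linear_combination (norm := module) h
      exact one_ne_zero (combo_eq_zero hb h2).2.1

omit [Fintype F] [DecidableEq F] in
lemma zvec_indep (hb : LinearIndependent F b) (o : Option F) :
    LinearIndependent F ![zvec b o, b 0] := by
  rw [LinearIndependent.pair_iff]
  intro s t h
  cases o with
  | none =>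
      simp only [zvec, Option.elim] at h
      have h2 : t • b 0 + (0:F) • b 1 + s • b 2 = 0 := by
        linear_combination (norm := module) h
      obtain ⟨h1, _, h3⟩ := combo_eq_zero hb h2
      exact ⟨h3, h1⟩
  | some c =>
      simp only [zvec, Option.elim] at h
      have h2 : t • b 0 + s • b 1 + (s*c) • b 2 = 0 := by
        linear_combination (norm := module) h
      obtain ⟨h1, h2', _⟩ := combo_eq_zero hb h2
      exact ⟨h2', h1⟩

/-- fibration of the projective plane minus the base point -/
def emap (hb : LinearIndependent F b) : Option F × F → Projectivization F (Fin 3 → F) :=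
  fun p => Projectivization.mk F (zvec b p.1 + p.2 • b 0) (zvec_add_smul_ne_zero hb p.1 p.2)

omit [Fintype F] [DecidableEq F] in
lemma emap_injective (hb : LinearIndependent F b) : Function.Injective (emap hb) := by
  rintro ⟨o, t⟩ ⟨o', t'⟩ h
  obtain ⟨a, ha⟩ := (Projectivization.mk_eq_mk_iff F _ _ _ _).mp h
  rw [Units.smul_def] at ha
  cases o with
  | none =>
      cases o' with
      | none =>
          simp only [zvec, Option.elim] at ha
          have h2 : ((a:F) * t' - t) • b 0 + (0:F) • b 1 + ((a:F) - 1) • b 2 = 0 := by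
            linear_combination (norm := module) ha
          obtain ⟨h1, _, h3⟩ := combo_eq_zero hb h2
          have htt : t = t' := by
            have ha1 : (a:F) = 1 := by linear_combination h3
            rw [ha1] at h1; linear_combination -h1
          rw [htt]
      | some c' =>
          simp only [zvec, Option.elim] at ha
          have h2 : ((a:F) * t' - t) • b 0 + (a:F) • b 1 + ((a:F) * c' - 1) • b 2 = 0 := by
            linear_combination (norm := module) ha
          obtain ⟨_, hbad, _⟩ := combo_eq_zero hb h2
          exact absurd hbad (Units.ne_zero a)
  | some c =>
      cases o' with
      | none =>
          simp only [zvec, Option.elim] at ha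
          have h2 : ((a:F) * t' - t) • b 0 + (-1:F) • b 1 + ((a:F) - c) • b 2 = 0 := by
            linear_combination (norm := module) ha
          obtain ⟨_, hbad, _⟩ := combo_eq_zero hb h2
          norm_num at hbad
      | some c' =>
          simp only [zvec, Option.elim] at ha
          have h2 : ((a:F) * t' - t) • b 0 + ((a:F) - 1) • b 1 + ((a:F) * c' - c) • b 2 = 0 := by
            linear_combination (norm := module) ha
          obtain ⟨h1, h2', h3⟩ := combo_eq_zero hb h2
          have ha1 : (a:F) = 1 := by linear_combination h2'
          rw [ha1] at h1 h3
          have hcc : c = c' := by linear_combination -h3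
          have htt : t = t' := by linear_combination -h1
          rw [hcc, htt]

omit [Fintype F] [DecidableEq F] in
lemma emap_ne_base (hb : LinearIndependent F b) (p : Option F × F) :
    emap hb p ≠ Projectivization.mk F (b 0) (hb.ne_zero 0) := by
  intro h
  obtain ⟨a, ha⟩ := (Projectivization.mk_eq_mk_iff F _ _ _ _).mp h
  rw [Units.smul_def] at ha
  rcases p with ⟨o, t⟩
  cases o with
  | none =>
      simp only [zvec, Option.elim] at ha
      have h2 : ((a:F) - t) • b 0 + (0:F) • b 1 + (-1:F) • b 2 = 0 := by
        linear_combination (norm := module) ha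
      have := (combo_eq_zero hb h2).2.2
      norm_num at this
  | some c =>
      simp only [zvec, Option.elim] at ha
      have h2 : ((a:F) - t) • b 0 + (-1:F) • b 1 + (-c) • b 2 = 0 := by
        linear_combination (norm := module) ha
      have := (combo_eq_zero hb h2).2.1
      norm_num at this

omit [Fintype F] [DecidableEq F] in
lemma emap_surj (hb : LinearIndependent F b) (y : Projectivization F (Fin 3 → F))
    (hy : y ≠ Projectivization.mk F (b 0) (hb.ne_zero 0)) :
    ∃ p, emap hb p = y := by
  have hspan := hb.span_eq_top_of_card_eq_finrank (by simp)
  have hrep : y.rep ∈ Submodule.span F (Set.range b) := by rw [hspan]; trivial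
  obtain ⟨c, hc⟩ := (Submodule.mem_span_range_iff_exists_fun F).mp hrep
  rw [Fin.sum_univ_three] at hc
  by_cases h1 : c 1 ≠ 0
  · refine ⟨⟨some (c 2 / c 1), c 0 / c 1⟩, ?_⟩
    rw [emap, ← Projectivization.mk_rep y, Projectivization.mk_eq_mk_iff]
    refine ⟨(Units.mk0 (c 1) h1)⁻¹, ?_⟩
    rw [← hc, Units.smul_def]
    simp only [zvec, Option.elim]
    norm_num
    match_scalars <;> field_simp
  · by_cases h2 : c 2 ≠ 0
    · refine ⟨⟨none, c 0 / c 2⟩, ?_⟩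
      rw [emap, ← Projectivization.mk_rep y, Projectivization.mk_eq_mk_iff]
      refine ⟨(Units.mk0 (c 2) h2)⁻¹, ?_⟩
      rw [← hc, Units.smul_def]
      simp only [zvec, Option.elim]
      push_neg at h1
      rw [h1]
      norm_num
      match_scalars <;> field_simp
    · push_neg at h1; push_neg at h2
      exfalso
      apply hy
      rw [← Projectivization.mk_rep y, Projectivization.mk_eq_mk_iff]
      have hc0 : c 0 ≠ 0 := by
        intro h0
        apply Projectivization.rep_nonzero y
        rw [← hc, h0, h1, h2]
        simp
      refine ⟨Units.mk0 (c 0) hc0, ?_⟩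
      rw [← hc, h1, h2, Units.smul_def]
      simp

/-- the polynomial cutting out the affine part of the fiber over `o` -/
def hpoly (g : MvPolynomial (Fin 3) F) (b : Fin 3 → (Fin 3 → F)) (o : Option F) : Polynomial F :=
  lineP (zvec b o) (b 0) g

def rK (g : MvPolynomial (Fin 3) F) (b : Fin 3 → (Fin 3 → F)) (o : Option F) : ℕ :=
  (hpoly g b o).roots.toFinset.card

omit [Fintype F] [DecidableEq F] in
lemma emap_mem_Zs_iff {g : MvPolynomial (Fin 3) F} {d : ℕ} (hg : g.IsHomogeneous d)
    (hb : LinearIndependent F b) (o : Option F) (t : F) :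
    emap hb (o, t) ∈ Zs g ↔ (hpoly g b o).eval t = 0 := by
  rw [emap, mem_Zs_iff hg, hpoly, eval_lineP]

/-- the master count -/
lemma core_count {g : MvPolynomial (Fin 3) F} {d : ℕ} (hg : g.IsHomogeneous d)
    (hNL : NoLine g) (hb : LinearIndependent F b)
    (hx : Projectivization.mk F (b 0) (hb.ne_zero 0) ∈ Zs g) :
    (Zs g).ncard = 1 + ∑ o : Option F, rK g b o := by
  have hpne : ∀ o, hpoly g b o ≠ 0 := fun o => hNL _ _ (zvec_indep hb o)
  set S : Finset (Option F × F) :=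
    Finset.univ.biUnion (fun o => ((hpoly g b o).roots.toFinset).image (fun t => (o, t))) with hS
  have hZs : Zs g = insert (Projectivization.mk F (b 0) (hb.ne_zero 0)) (emap hb '' ↑S) := by
    ext y
    constructor
    · intro hy
      by_cases hyx : y = Projectivization.mk F (b 0) (hb.ne_zero 0)
      · rw [hyx]; exact Set.mem_insert _ _
      · obtain ⟨⟨o, t⟩, hp⟩ := emap_surj hb y hyx
        apply Set.mem_insert_of_mem
        refine ⟨(o, t), ?_, hp⟩
        rw [hS]
        simp only [Finset.coe_biUnion, Finset.coe_univ, Set.mem_iUnion, Finset.coe_image,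
          Set.mem_image, Finset.mem_coe, Multiset.mem_toFinset]
        refine ⟨o, trivial, t, ?_, rfl⟩
        rw [Polynomial.mem_roots (hpne o)]
        exact (emap_mem_Zs_iff hg hb o t).mp (by rw [hp]; exact hy)
    · intro hy
      rcases Set.mem_insert_iff.mp hy with h | h
      · rw [h]; exact hx
      · obtain ⟨⟨o, t⟩, hmem, hp⟩ := h
        rw [← hp, emap_mem_Zs_iff hg hb o t]
        simp only [hS, Finset.coe_biUnion, Finset.coe_univ, Set.mem_iUnion, Finset.coe_image,
          Set.mem_image, Finset.mem_coe, Multiset.mem_toFinset] at hmem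
        obtain ⟨o', _, t', ht', heq⟩ := hmem
        have ho : o' = o := by simpa using congrArg Prod.fst heq
        have ht : t' = t := by simpa using congrArg Prod.snd heq
        subst ho; subst ht
        exact (Polynomial.mem_roots (hpne o')).mp ht'
  rw [hZs]
  rw [Set.ncard_insert_of_notMem (by
    intro hmem
    obtain ⟨p, _, hp⟩ := hmem
    exact emap_ne_base hb p hp) (Set.toFinite _)]
  rw [Set.ncard_image_of_injective _ (emap_injective hb), Set.ncard_coe_finset]
  rw [Finset.card_biUnion (by
    intro o1 _ o2 _ hne
    rw [Function.onFun, Finset.disjoint_left]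
    rintro ⟨o, t⟩ hmem1 hmem2
    simp only [Finset.mem_image] at hmem1 hmem2
    obtain ⟨t1, _, he1⟩ := hmem1
    obtain ⟨t2, _, he2⟩ := hmem2
    apply hne
    have e1 : o1 = o := by simpa using congrArg Prod.fst he1
    have e2 : o2 = o := by simpa using congrArg Prod.fst he2
    rw [e1, e2])]
  rw [add_comm]
  congr 1
  apply Finset.sum_congr rfl
  intro o _
  rw [Finset.card_image_of_injective _ (fun a b h => by simpa using congrArg Prod.snd h)]
  rfl


omit [Fintype F] [DecidableEq F] in
lemma pair_comm_indep {w u : Fin 3 → F} (h : LinearIndependent F ![w, u]) :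
    LinearIndependent F ![u, w] := by
  rw [LinearIndependent.pair_iff] at h ⊢
  intro s t hst
  obtain ⟨h1, h2⟩ := h t s (by linear_combination (norm := module) hst)
  exact ⟨h2, h1⟩

omit [Fintype F] [DecidableEq F] in
lemma exists_extend_pair {w u : Fin 3 → F} (h : LinearIndependent F ![w, u]) :
    ∃ c, LinearIndependent F ![w, u, c] := by
  have hne : Submodule.span F (Set.range ![w, u]) ≠ ⊤ := by
    intro htop
    have h1 : Module.finrank F (Submodule.span F (Set.range ![w, u])) = 2 := by
      rw [finrank_span_eq_card h]; simp
    rw [htop, finrank_top] at h1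
    simp at h1
  obtain ⟨c, _, hc⟩ := SetLike.exists_of_lt
    (show Submodule.span F (Set.range ![w, u]) < ⊤ from lt_top_iff_ne_top.mpr hne)
  refine ⟨c, ?_⟩
  have hsnoc : ![w, u, c] = Fin.snoc ![w, u] c := by
    funext i
    refine Fin.lastCases ?_ (fun j => ?_) i
    · rw [Fin.snoc_last]; rfl
    · rw [Fin.snoc_castSucc]
      fin_cases j <;> rfl
  rw [hsnoc, linearIndependent_fin_snoc]
  exact ⟨h, hc⟩

omit [Fintype F] [DecidableEq F] in
lemma exists_extend_one {w : Fin 3 → F} (hw : w ≠ 0) :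
    ∃ b : Fin 3 → (Fin 3 → F), b 0 = w ∧ LinearIndependent F b := by
  have h1 : LinearIndependent F ![w] := by
    apply linearIndependent_unique_iff.mpr
    simpa using hw
  have hne : Submodule.span F (Set.range ![w]) ≠ ⊤ := by
    intro htop
    have h2 : Module.finrank F (Submodule.span F (Set.range ![w])) = 1 := by
      rw [finrank_span_eq_card h1]; simp
    rw [htop, finrank_top] at h2
    simp at h2
  obtain ⟨u, _, hu⟩ := SetLike.exists_of_lt
    (show Submodule.span F (Set.range ![w]) < ⊤ from lt_top_iff_ne_top.mpr hne)
  have h2 : LinearIndependent F ![w, u] := by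
    have hsnoc : ![w, u] = Fin.snoc ![w] u := by
      funext i
      refine Fin.lastCases ?_ (fun j => ?_) i
      · rw [Fin.snoc_last]; rfl
      · rw [Fin.snoc_castSucc]
        fin_cases j <;> rfl
    rw [hsnoc, linearIndependent_fin_snoc]
    exact ⟨h1, hu⟩
  obtain ⟨c, hc⟩ := exists_extend_pair h2
  exact ⟨![w, u, c], rfl, hc⟩

lemma rK_le_natDegree (g : MvPolynomial (Fin 3) F) (b : Fin 3 → (Fin 3 → F)) (o : Option F) :
    rK g b o ≤ (hpoly g b o).natDegree :=
  le_trans (Multiset.toFinset_card_le _) (Polynomial.card_roots' _)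

omit [Fintype F] [DecidableEq F] in
lemma hpoly_natDegree_le {g : MvPolynomial (Fin 3) F} {d : ℕ} (hg : g.IsHomogeneous d)
    {b : Fin 3 → (Fin 3 → F)} (hx : MvPolynomial.eval (b 0) g = 0) (o : Option F) :
    (hpoly g b o).natDegree ≤ d - 1 := by
  rw [Polynomial.natDegree_le_iff_coeff_eq_zero]
  intro N hN
  rcases Nat.lt_or_ge N (d+1) with h | h
  · have hNd : N = d := by omega
    rw [hNd, hpoly, coeff_lineP_top hg, hx]
  · exact coeff_lineP_gt hg _ _ (by omega)

omit [Fintype F] [DecidableEq F] in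
lemma hpoly_natDegree_le_tan {g : MvPolynomial (Fin 3) F} {d : ℕ} (hg : g.IsHomogeneous d)
    (hd : 1 ≤ d) {b : Fin 3 → (Fin 3 → F)} (hx : MvPolynomial.eval (b 0) g = 0) {o : Option F}
    (htan : gdot g (b 0) (zvec b o) = 0) :
    (hpoly g b o).natDegree ≤ d - 2 := by
  rw [Polynomial.natDegree_le_iff_coeff_eq_zero]
  intro N hN
  rcases Nat.lt_or_ge N d with h | h
  · have hNd : N = d - 1 := by omega
    rw [hNd, hpoly, coeff_lineP_sub1 hg hd, htan]
  · rcases Nat.eq_or_lt_of_le h with h' | h'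
    · rw [← h', hpoly, coeff_lineP_top hg, hx]
    · exact coeff_lineP_gt hg _ _ h'

omit [Fintype F] [DecidableEq F] in
lemma gdot_zvec (g : MvPolynomial (Fin 3) F) (b : Fin 3 → (Fin 3 → F)) (o : Option F) :
    gdot g (b 0) (zvec b o)
      = o.elim (gdot g (b 0) (b 2)) (fun c => gdot g (b 0) (b 1) + c * gdot g (b 0) (b 2)) := by
  cases o with
  | none => rfl
  | some c => exact gdot_linear g (b 0) (b 1) (b 2) c

omit [Fintype F] [DecidableEq F] in
lemma tan_unique {g : MvPolynomial (Fin 3) F} {b : Fin 3 → (Fin 3 → F)}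
    (hn : ¬(gdot g (b 0) (b 1) = 0 ∧ gdot g (b 0) (b 2) = 0)) :
    ∃ oT : Option F, ∀ o : Option F, (gdot g (b 0) (zvec b o) = 0 ↔ o = oT) := by
  set α := gdot g (b 0) (b 1) with hα
  set β := gdot g (b 0) (b 2) with hβ
  by_cases hb0 : β = 0
  · refine ⟨none, ?_⟩
    intro o
    rw [gdot_zvec]
    cases o with
    | none => simp [← hβ, hb0]
    | some c =>
        simp only [Option.elim, ← hα, ← hβ, hb0, mul_zero, add_zero]
        simp only [reduceCtorEq, iff_false]
        intro h; exact hn ⟨h, hb0⟩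
  · refine ⟨some (-α/β), ?_⟩
    intro o
    rw [gdot_zvec]
    cases o with
    | none => simp [← hβ, hb0]
    | some c =>
        simp only [Option.elim, ← hα, ← hβ, Option.some.injEq]
        constructor
        · intro h
          field_simp
          linear_combination h
        · intro h; rw [h]; field_simp; ring

lemma sum_rK_split {g : MvPolynomial (Fin 3) F} {b : Fin 3 → (Fin 3 → F)} {m1 m2 : ℕ}
    {oT : Option F} (hall : ∀ o, rK g b o ≤ m1) (htan : rK g b oT ≤ m2) :
    ∑ o : Option F, rK g b o ≤ m2 + Fintype.card F * m1 := by
  rw [Finset.sum_eq_sum_sdiff_singleton_add (Finset.mem_univ oT)]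
  have h1 : ∑ o ∈ Finset.univ \ {oT}, rK g b o ≤ (Fintype.card F) * m1 := by
    have := Finset.sum_le_card_nsmul (Finset.univ \ {oT}) (rK g b) m1 (fun o _ => hall o)
    have hcard : (Finset.univ \ {oT} : Finset (Option F)).card = Fintype.card F := by
      rw [Finset.card_sdiff_of_subset (Finset.subset_univ _)]
      simp
    rw [hcard] at this
    simpa [smul_eq_mul] using this
  omega

/-- the base point and frame obtained from a point of `Zs g` -/
lemma frame_of_mem {g : MvPolynomial (Fin 3) F} {d : ℕ} (hg : g.IsHomogeneous d)
    {x : Projectivization F (Fin 3 → F)} (hx : x ∈ Zs g) :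
    ∃ b : Fin 3 → (Fin 3 → F), ∃ hb : LinearIndependent F b,
      MvPolynomial.eval (b 0) g = 0 ∧
      Projectivization.mk F (b 0) (hb.ne_zero 0) ∈ Zs g := by
  obtain ⟨b, hb0, hb⟩ := exists_extend_one (Projectivization.rep_nonzero x)
  refine ⟨b, hb, ?_, ?_⟩
  · rw [hb0]; exact hx
  · rw [mem_Zs_iff hg, hb0]
    exact hx

theorem bound_main {g : MvPolynomial (Fin 3) F} {d : ℕ} (hd : 2 ≤ d)
    (hg : g.IsHomogeneous d) (hNL : NoLine g) :
    (Zs g).ncard ≤ (d-1) * Fintype.card F + (d-1) := by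
  rcases Set.eq_empty_or_nonempty (Zs g) with hemp | ⟨x, hx⟩
  · rw [hemp, Set.ncard_empty]; exact Nat.zero_le _
  obtain ⟨b, hb, hev, hmk⟩ := frame_of_mem hg hx
  have hcount := core_count hg hNL hb hmk
  set q := Fintype.card F with hq
  have hq1 : 1 ≤ q := Fintype.card_pos
  by_cases hcase : gdot g (b 0) (b 1) = 0 ∧ gdot g (b 0) (b 2) = 0
  · -- all fibers are tangent
    have hall : ∀ o, rK g b o ≤ d - 2 := by
      intro o
      refine le_trans (rK_le_natDegree g b o) (hpoly_natDegree_le_tan hg (by omega) hev ?_)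
      rw [gdot_zvec]
      cases o with
      | none => exact hcase.2
      | some c => simp [hcase.1, hcase.2]
    have hsum : ∑ o : Option F, rK g b o ≤ (q+1) * (d-2) := by
      have := Finset.sum_le_card_nsmul Finset.univ (rK g b) (d-2) (fun o _ => hall o)
      simpa [smul_eq_mul, hq] using this
    rw [hcount]
    obtain ⟨e, rfl⟩ : ∃ e, d = e + 2 := ⟨d - 2, by omega⟩
    simp only [Nat.add_sub_cancel] at hsum ⊢
    have h1 : e + 2 - 1 = e + 1 := by omega
    rw [h1]
    nlinarith [hsum, hq1]
  · obtain ⟨oT, hoT⟩ := tan_unique hcase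
    have hall : ∀ o, rK g b o ≤ d - 1 :=
      fun o => le_trans (rK_le_natDegree g b o) (hpoly_natDegree_le hg hev o)
    have htan : rK g b oT ≤ d - 2 := by
      refine le_trans (rK_le_natDegree g b oT) (hpoly_natDegree_le_tan hg (by omega) hev ?_)
      exact (hoT oT).mpr rfl
    have hsum := sum_rK_split hall htan
    rw [← hq] at hsum
    rw [hcount]
    have hkey : d - 2 + q * (d-1) + 1 ≤ (d-1) * q + (d-1) := by
      obtain ⟨e, rfl⟩ : ∃ e, d = e + 2 := ⟨d - 2, by omega⟩
      simp only [Nat.add_sub_cancel]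
      have h1 : e + 2 - 1 = e + 1 := by omega
      rw [h1]
      nlinarith []
    linarith [hsum, hkey]


theorem rigid {g : MvPolynomial (Fin 3) F} {d : ℕ} (hd : 3 ≤ d)
    (hg : g.IsHomogeneous d) (hNL : NoLine g) :
    (Zs g).ncard ≠ (d-1) * Fintype.card F + (d-1) := by
  intro hN
  have hq1 : 1 ≤ Fintype.card F := Fintype.card_pos
  have hne0 : (Zs g).ncard ≠ 0 := by
    rw [hN]
    have h1 : 0 < d - 1 := by omega
    exact (Nat.lt_of_lt_of_le h1 (Nat.le_add_left _ _)).ne'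
  obtain ⟨x, hx⟩ := Set.nonempty_of_ncard_ne_zero hne0
  obtain ⟨b, hb, hev, hmk⟩ := frame_of_mem hg hx
  have hcount := core_count hg hNL hb hmk
  have hall : ∀ o, rK g b o ≤ d - 1 :=
    fun o => le_trans (rK_le_natDegree g b o) (hpoly_natDegree_le hg hev o)
  have hcase : ¬(gdot g (b 0) (b 1) = 0 ∧ gdot g (b 0) (b 2) = 0) := by
    intro hcase
    have hall2 : ∀ o, rK g b o ≤ d - 2 := by
      intro o
      refine le_trans (rK_le_natDegree g b o) (hpoly_natDegree_le_tan hg (by omega) hev ?_)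
      rw [gdot_zvec]
      cases o with
      | none => exact hcase.2
      | some c => simp [hcase.1, hcase.2]
    have hsum : ∑ o : Option F, rK g b o ≤ (Fintype.card F + 1) * (d-2) := by
      have := Finset.sum_le_card_nsmul Finset.univ (rK g b) (d-2) (fun o _ => hall2 o)
      simpa [smul_eq_mul] using this
    rw [hcount] at hN
    obtain ⟨e, rfl⟩ : ∃ e, d = e + 3 := ⟨d - 3, by omega⟩
    obtain ⟨f, hf⟩ : ∃ f, Fintype.card F = f + 1 := ⟨Fintype.card F - 1, by omega⟩
    rw [hf] at hsum hN
    have he1 : e + 3 - 1 = e + 2 := by omega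
    have he2 : e + 3 - 2 = e + 1 := by omega
    rw [he1] at hN
    rw [he2] at hsum
    nlinarith [hsum, hN]
  obtain ⟨oT, hoT⟩ := tan_unique hcase
  have htanT : gdot g (b 0) (zvec b oT) = 0 := (hoT oT).mpr rfl
  have htanc : rK g b oT ≤ d - 2 :=
    le_trans (rK_le_natDegree g b oT) (hpoly_natDegree_le_tan hg (by omega) hev htanT)
  have hrest : ∑ o ∈ Finset.univ \ {oT}, rK g b o ≤ Fintype.card F * (d-1) := by
    have h1 := Finset.sum_le_card_nsmul (Finset.univ \ {oT}) (rK g b) (d-1) (fun o _ => hall o)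
    have hcard : (Finset.univ \ {oT} : Finset (Option F)).card = Fintype.card F := by
      rw [Finset.card_sdiff_of_subset (Finset.subset_univ _)]
      simp
    rw [hcard] at h1
    simpa [smul_eq_mul] using h1
  have hsplit : ∑ o : Option F, rK g b o
      = ∑ o ∈ Finset.univ \ {oT}, rK g b o + rK g b oT :=
    Finset.sum_eq_sum_sdiff_singleton_add (Finset.mem_univ oT) _
  have hTeq : rK g b oT = d - 2 := by
    rw [hcount] at hN
    obtain ⟨P, hP⟩ : ∃ P, Fintype.card F * (d-1) = P := ⟨_, rfl⟩
    rw [hP] at hrest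
    have hP2 : (d-1) * Fintype.card F = P := by rw [← hP, mul_comm]
    rw [hP2] at hN
    omega
  set hT := hpoly g b oT with hhT
  have hTne : hT ≠ 0 := hNL _ _ (zvec_indep hb oT)
  have hdeg : hT.natDegree ≤ d - 2 := hpoly_natDegree_le_tan hg (by omega) hev htanT
  have hcard1 : hT.roots.toFinset.card = d - 2 := hTeq
  have hnodup : hT.roots.Nodup := by
    rw [← Multiset.toFinset_card_eq_card_iff_nodup]
    have h1 := Polynomial.card_roots' hT
    have h2 := Multiset.toFinset_card_le hT.roots
    omega
  have hne2 : (hT.roots.toFinset).Nonempty := by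
    rw [← Finset.card_pos, hcard1]; omega
  obtain ⟨c1, hc1⟩ := hne2
  have hc1root : hT.eval c1 = 0 := (Polynomial.mem_roots hTne).mp (Multiset.mem_toFinset.mp hc1)
  have hmult : hT.rootMultiplicity c1 = 1 := by
    rw [← Polynomial.count_roots]
    have hle := Multiset.nodup_iff_count_le_one.mp hnodup c1
    have hge : 1 ≤ hT.roots.count c1 :=
      Multiset.one_le_count_iff_mem.mpr (Multiset.mem_toFinset.mp hc1)
    omega
  have hder := simple_root_deriv hTne hmult
  rw [hhT, hpoly, deriv_lineP] at hder
  set yv := zvec b oT + c1 • b 0 with hyv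
  have hyvne : yv ≠ 0 := zvec_add_smul_ne_zero hb oT c1
  have hyZ : MvPolynomial.eval yv g = 0 := by
    rw [hyv, ← eval_lineP]
    exact hc1root
  have hpair : LinearIndependent F ![yv, b 0] := by
    rw [LinearIndependent.pair_iff]
    intro s t hst
    rw [hyv] at hst
    cases hoT' : oT with
    | none =>
        rw [hoT'] at hst
        simp only [zvec, Option.elim] at hst
        have h2 : (s * c1 + t) • b 0 + (0:F) • b 1 + s • b 2 = 0 := by
          linear_combination (norm := module) hst
        obtain ⟨h1', _, h3'⟩ := combo_eq_zero hb h2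
        refine ⟨h3', by rw [h3'] at h1'; simpa using h1'⟩
    | some c =>
        rw [hoT'] at hst
        simp only [zvec, Option.elim] at hst
        have h2 : (s * c1 + t) • b 0 + s • b 1 + (s * c) • b 2 = 0 := by
          linear_combination (norm := module) hst
        obtain ⟨h1', h2', _⟩ := combo_eq_zero hb h2
        refine ⟨h2', by rw [h2'] at h1'; simpa using h1'⟩
  obtain ⟨w2, hw2⟩ := exists_extend_pair hpair
  have hb'li : LinearIndependent F ![yv, b 0, w2] := hw2
  have hev' : MvPolynomial.eval ((![yv, b 0, w2]) 0) g = 0 := hyZ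
  have hmk' : Projectivization.mk F ((![yv, b 0, w2]) 0) (hb'li.ne_zero 0) ∈ Zs g := by
    rw [mem_Zs_iff hg]
    exact hyZ
  have hcount' := core_count hg hNL hb'li hmk'
  have hall' : ∀ o, rK g ![yv, b 0, w2] o ≤ d - 1 :=
    fun o => le_trans (rK_le_natDegree _ _ _) (hpoly_natDegree_le hg hev' o)
  have hα' : gdot g ((![yv, b 0, w2]) 0) ((![yv, b 0, w2]) 1) ≠ 0 := by
    show gdot g yv (b 0) ≠ 0
    exact hder
  obtain ⟨oT', hoT'⟩ := tan_unique (fun hh => hα' hh.1)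
  have htanc' : rK g ![yv, b 0, w2] oT' ≤ d - 2 :=
    le_trans (rK_le_natDegree _ _ _)
      (hpoly_natDegree_le_tan hg (by omega) hev' ((hoT' oT').mpr rfl))
  have hsome0 : (some (0:F)) ≠ oT' := by
    intro hEq
    have h1 := (hoT' (some 0)).mpr hEq
    rw [gdot_zvec] at h1
    simp only [Option.elim, mul_comm, zero_mul, add_zero] at h1
    exact hα' (by simpa using h1)
  have hz0 : zvec ![yv, b 0, w2] (some (0:F)) = b 0 := by
    simp [zvec]
  have hkey : rK g ![yv, b 0, w2] (some (0:F)) = d - 2 := by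
    have hh' : hpoly g ![yv, b 0, w2] (some 0) = lineP (b 0) yv g := by
      rw [hpoly, hz0]
      rfl
    have hh'ne : lineP (b 0) yv g ≠ 0 := hNL _ _ (pair_comm_indep hpair)
    have hset : (lineP (b 0) yv g).roots.toFinset
        = insert (0:F) ((hT.roots.toFinset.erase c1).image fun s => (s - c1)⁻¹) := by
      ext t
      simp only [Multiset.mem_toFinset, Finset.mem_insert, Finset.mem_image, Finset.mem_erase]
      rw [Polynomial.mem_roots hh'ne]
      constructor
      · intro ht
        by_cases ht0 : t = 0
        · exact Or.inl ht0
        · right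
          have ht2 : MvPolynomial.eval (b 0 + t • yv) g = 0 := by
            rw [← eval_lineP]; exact ht
          have hident : (b 0) + t • yv = t • (zvec b oT + (c1 + t⁻¹) • b 0) := by
            rw [hyv]
            match_scalars <;> (field_simp; try ring)
          rw [hident, eval_smul hg] at ht2
          have htd : t ^ d ≠ 0 := pow_ne_zero d ht0
          have hroot2 : hT.eval (c1 + t⁻¹) = 0 := by
            rw [hhT, hpoly, eval_lineP]
            rcases mul_eq_zero.mp ht2 with h | h
            · exact absurd h htd
            · exact h
          refine ⟨c1 + t⁻¹, ⟨by simpa using inv_ne_zero ht0, ?_⟩,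
            by rw [add_sub_cancel_left, inv_inv]⟩
          rw [Polynomial.mem_roots hTne]
          exact hroot2
      · intro h
        rcases h with rfl | ⟨s, ⟨hsne, hsmem⟩, rfl⟩
        · show Polynomial.IsRoot _ 0
          rw [Polynomial.IsRoot, eval_lineP]
          simpa using hev
        · have hts : (s - c1) ≠ 0 := sub_ne_zero.mpr hsne
          have hroots : hT.eval s = 0 := (Polynomial.mem_roots hTne).mp hsmem
          show Polynomial.IsRoot _ ((s - c1)⁻¹)
          rw [Polynomial.IsRoot, eval_lineP]
          have hident : (b 0) + (s - c1)⁻¹ • yv = (s - c1)⁻¹ • (zvec b oT + s • b 0) := by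
            rw [hyv]
            match_scalars <;> (field_simp; try ring)
          rw [hident, eval_smul hg]
          have : MvPolynomial.eval (zvec b oT + s • b 0) g = 0 := by
            rw [← eval_lineP]
            exact hroots
          rw [this, mul_zero]
    have : rK g ![yv, b 0, w2] (some (0:F)) = (lineP (b 0) yv g).roots.toFinset.card := by
      rw [rK, hh']
    rw [this, hset]
    rw [Finset.card_insert_of_notMem (by
      simp only [Finset.mem_image, Finset.mem_erase]
      rintro ⟨s, ⟨hsne, _⟩, himg⟩
      exact (inv_ne_zero (sub_ne_zero.mpr hsne)) himg)]
    rw [Finset.card_image_of_injOn (by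
      intro s1 hs1 s2 hs2 hEq
      have h2 := inv_inj.mp hEq
      linear_combination h2)]
    rw [Finset.card_erase_of_mem hc1, hcard1]
    omega
  -- final contradiction
  have hs1 : ∑ o : Option F, rK g ![yv, b 0, w2] o
      = ∑ o ∈ Finset.univ \ {oT'}, rK g ![yv, b 0, w2] o + rK g ![yv, b 0, w2] oT' :=
    Finset.sum_eq_sum_sdiff_singleton_add (Finset.mem_univ oT') _
  have hs2 : ∑ o ∈ Finset.univ \ {oT'}, rK g ![yv, b 0, w2] o
      = ∑ o ∈ (Finset.univ \ {oT'}) \ {some (0:F)}, rK g ![yv, b 0, w2] o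
        + rK g ![yv, b 0, w2] (some (0:F)) :=
    Finset.sum_eq_sum_sdiff_singleton_add (by simp [Finset.mem_sdiff, hsome0]) _
  have hrest' : ∑ o ∈ (Finset.univ \ {oT'}) \ {some (0:F)}, rK g ![yv, b 0, w2] o
      ≤ (Fintype.card F - 1) * (d-1) := by
    have h1 := Finset.sum_le_card_nsmul ((Finset.univ \ {oT'}) \ {some (0:F)})
      (rK g ![yv, b 0, w2]) (d-1) (fun o _ => hall' o)
    have hcard : (((Finset.univ \ {oT'}) \ {some (0:F)}) : Finset (Option F)).card
        = Fintype.card F - 1 := by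
      rw [Finset.card_sdiff_of_subset (by simp [Finset.mem_sdiff, hsome0]),
        Finset.card_sdiff_of_subset (Finset.subset_univ _)]
      simp
    rw [hcard] at h1
    simpa [smul_eq_mul] using h1
  rw [hcount'] at hN
  obtain ⟨e, rfl⟩ : ∃ e, d = e + 3 := ⟨d - 3, by omega⟩
  obtain ⟨f, hf⟩ : ∃ f, Fintype.card F = f + 1 := ⟨Fintype.card F - 1, by omega⟩
  have he1 : e + 3 - 1 = e + 2 := by omega
  have he2 : e + 3 - 2 = e + 1 := by omega
  rw [hf, he1] at hN hrest'
  rw [he2] at hkey htanc'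
  rw [hs1, hs2, hkey] at hN
  simp only [Nat.add_sub_cancel] at hrest'
  nlinarith [hN, hrest', htanc']


end Geometry

/-! ### Extraction of a linear factor -/

lemma weight_eq_sum {k : ℕ} (m : Fin k →₀ ℕ) : (Finsupp.weight 1 m : ℕ) = ∑ i, m i := by
  rw [Finsupp.weight_apply, Finsupp.sum_fintype]
  · simp
  · intro i; simp

lemma isHomogeneous_of_sum {k : ℕ} {g : MvPolynomial (Fin k) F} {d : ℕ}
    (h : ∀ m, MvPolynomial.coeff m g ≠ 0 → ∑ i, m i = d) : g.IsHomogeneous d := by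
  intro m hm
  rw [show (Finsupp.weight 1) m = ∑ i, m i from weight_eq_sum m]
  exact h m hm

lemma linear_form_homog (w : Fin 3 → F) :
    (∑ j, MvPolynomial.C (w j) * MvPolynomial.X j : MvPolynomial (Fin 3) F).IsHomogeneous 1 := by
  apply MvPolynomial.IsHomogeneous.sum
  intro j _
  have := (MvPolynomial.isHomogeneous_C (Fin 3) (w j)).mul (MvPolynomial.isHomogeneous_X F j)
  rwa [zero_add] at this

lemma hom_of_X_mul {H : MvPolynomial (Fin 3) F} {i : Fin 3} {d : ℕ} (hd : 1 ≤ d)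
    (h : (MvPolynomial.X i * H).IsHomogeneous d) : H.IsHomogeneous (d-1) := by
  apply isHomogeneous_of_sum
  intro m hm
  have hco : MvPolynomial.coeff (Finsupp.single i 1 + m) (MvPolynomial.X i * H)
      = MvPolynomial.coeff m H := MvPolynomial.coeff_X_mul m i H
  have hmem : (Finsupp.single i 1 + m) ∈ (MvPolynomial.X i * H).support :=
    MvPolynomial.mem_support_iff.mpr (by rw [hco]; exact hm)
  have hsum := monomial_degree_eq h hmem
  have hsingle : ∑ j, (Finsupp.single i 1 : Fin 3 →₀ ℕ) j = 1 := by
    simp [Finsupp.single_apply]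
  simp only [Finsupp.add_apply] at hsum
  rw [Finset.sum_add_distrib, hsingle] at hsum
  omega

lemma binG_zero {g : MvPolynomial (Fin 3) F} {d : ℕ} (hg : g.IsHomogeneous d)
    {a b : Fin 3 → F} (hl : lineP a b g = 0) : binG a b g = 0 := by
  apply MvPolynomial.ext
  intro m
  rw [MvPolynomial.coeff_zero]
  by_contra hne
  have hsup : m ∈ (binG a b g).support := MvPolynomial.mem_support_iff.mpr hne
  have hsum : m 0 + m 1 = d := by
    have := monomial_degree_eq (binG_isHomogeneous hg a b) hsup
    rwa [Fin.sum_univ_two] at this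
  have hme : m = Finsupp.single 0 (d - m 1) + Finsupp.single 1 (m 1) := by
    ext i
    fin_cases i <;> simp [Finsupp.single_apply] <;> omega
  have hco := coeff_aeval_binG _ (binG_isHomogeneous hg a b) (m 1)
  rw [← lineP_eq_binG, hl] at hco
  simp only [Polynomial.coeff_zero] at hco
  rw [if_pos (by omega : m 1 ≤ d)] at hco
  rw [hme] at hne
  exact hne hco.symm

/-- trivariate substitution form -/
def triG (a b c : Fin 3 → F) (g : MvPolynomial (Fin 3) F) : MvPolynomial (Fin 3) F :=
  MvPolynomial.aeval (fun i => MvPolynomial.C (a i) * MvPolynomial.X 0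
    + MvPolynomial.C (b i) * MvPolynomial.X 1 + MvPolynomial.C (c i) * MvPolynomial.X 2) g

lemma triG_isHomogeneous {g : MvPolynomial (Fin 3) F} {d : ℕ} (hg : g.IsHomogeneous d)
    (a b c : Fin 3 → F) : (triG a b c g).IsHomogeneous d := by
  apply isHomogeneous_aeval hg
  intro i
  have h0 := (MvPolynomial.isHomogeneous_C (Fin 3) (a i)).mul (MvPolynomial.isHomogeneous_X F (0 : Fin 3))
  have h1 := (MvPolynomial.isHomogeneous_C (Fin 3) (b i)).mul (MvPolynomial.isHomogeneous_X F (1 : Fin 3))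
  have h2 := (MvPolynomial.isHomogeneous_C (Fin 3) (c i)).mul (MvPolynomial.isHomogeneous_X F (2 : Fin 3))
  rw [zero_add] at h0 h1 h2
  exact (h0.add h1).add h2

lemma psi0_coeff (p : MvPolynomial (Fin 3) F) {m : Fin 3 →₀ ℕ} (hm : m 2 = 0) :
    MvPolynomial.coeff m (MvPolynomial.aeval
      ![MvPolynomial.X 0, MvPolynomial.X 1, (0 : MvPolynomial (Fin 3) F)] p)
    = MvPolynomial.coeff m p := by
  conv_lhs => rw [← MvPolynomial.support_sum_monomial_coeff p]
  rw [map_sum, MvPolynomial.coeff_sum]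
  have hterm : ∀ m' ∈ p.support,
      MvPolynomial.coeff m ((MvPolynomial.aeval
        ![MvPolynomial.X 0, MvPolynomial.X 1, (0 : MvPolynomial (Fin 3) F)])
        (MvPolynomial.monomial m' (MvPolynomial.coeff m' p)))
      = if m' = m then MvPolynomial.coeff m' p else 0 := by
    intro m' _
    rw [MvPolynomial.aeval_monomial]
    rw [Finsupp.prod_fintype _ _ (fun i => pow_zero _), Fin.prod_univ_three]
    simp only [Matrix.cons_val_zero, Matrix.cons_val_one, Matrix.head_cons]
    by_cases h2 : m' 2 = 0
    · have hm'eq : Finsupp.single (0 : Fin 3) (m' 0) + Finsupp.single 1 (m' 1) = m' := by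
        ext i
        fin_cases i <;> simp [Finsupp.single_apply, h2]
      have hv2 : (![MvPolynomial.X 0, MvPolynomial.X 1, (0 : MvPolynomial (Fin 3) F)]) 2
          = 0 := rfl
      rw [hv2, h2, pow_zero, mul_one, MvPolynomial.X_pow_eq_monomial,
        MvPolynomial.X_pow_eq_monomial, MvPolynomial.monomial_mul,
        MvPolynomial.algebraMap_eq, MvPolynomial.C_mul_monomial, mul_one,
        hm'eq, MvPolynomial.coeff_monomial]
      split_ifs <;> simp
    · have hv2 : (![MvPolynomial.X 0, MvPolynomial.X 1, (0 : MvPolynomial (Fin 3) F)]) 2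
          = 0 := rfl
      rw [hv2, zero_pow h2, mul_zero, mul_zero, MvPolynomial.coeff_zero]
      rw [if_neg (fun hEq => h2 (by rw [hEq]; exact hm))]
  rw [Finset.sum_congr rfl hterm, Finset.sum_ite_eq' p.support]
  split_ifs with hmem
  · rfl
  · exact (MvPolynomial.notMem_support_iff.mp hmem).symm

lemma psi0_triG {g : MvPolynomial (Fin 3) F} {a b c : Fin 3 → F} (hbin : binG a b g = 0) :
    MvPolynomial.aeval ![MvPolynomial.X 0, MvPolynomial.X 1, (0 : MvPolynomial (Fin 3) F)]
      (triG a b c g) = 0 := by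
  have h1 := congrArg (fun ψ => ψ g) (MvPolynomial.comp_aeval
    (fun i => MvPolynomial.C (a i) * MvPolynomial.X 0
      + MvPolynomial.C (b i) * MvPolynomial.X 1 + MvPolynomial.C (c i) * MvPolynomial.X 2)
    (MvPolynomial.aeval ![MvPolynomial.X 0, MvPolynomial.X 1, (0 : MvPolynomial (Fin 3) F)]))
  have h2 := congrArg (fun ψ => ψ g) (MvPolynomial.comp_aeval
    (fun i => MvPolynomial.C (a i) * MvPolynomial.X 0 + MvPolynomial.C (b i) * MvPolynomial.X 1
      : Fin 3 → MvPolynomial (Fin 2) F)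
    (MvPolynomial.rename (Fin.castSucc : Fin 2 → Fin 3)))
  simp only [AlgHom.comp_apply] at h1 h2
  have hfun1 : (fun i => (MvPolynomial.aeval
      ![MvPolynomial.X 0, MvPolynomial.X 1, (0 : MvPolynomial (Fin 3) F)])
      (MvPolynomial.C (a i) * MvPolynomial.X 0
        + MvPolynomial.C (b i) * MvPolynomial.X 1 + MvPolynomial.C (c i) * MvPolynomial.X 2))
      = fun i => (MvPolynomial.C (a i) * MvPolynomial.X 0
        + MvPolynomial.C (b i) * MvPolynomial.X 1 : MvPolynomial (Fin 3) F) := by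
    funext i
    simp
  have hfun2 : (fun i => (MvPolynomial.rename (Fin.castSucc : Fin 2 → Fin 3))
      (MvPolynomial.C (a i) * MvPolynomial.X 0 + MvPolynomial.C (b i) * MvPolynomial.X 1))
      = fun i => (MvPolynomial.C (a i) * MvPolynomial.X 0
        + MvPolynomial.C (b i) * MvPolynomial.X 1 : MvPolynomial (Fin 3) F) := by
    funext i
    simp [MvPolynomial.rename_C, MvPolynomial.rename_X]
  rw [triG, h1, hfun1, ← hfun2, ← h2]
  have hb2 : (MvPolynomial.aeval (fun i => MvPolynomial.C (a i) * MvPolynomial.X 0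
      + MvPolynomial.C (b i) * MvPolynomial.X 1)) g = binG a b g := rfl
  rw [hb2, hbin, map_zero]

lemma X2_dvd_triG {g : MvPolynomial (Fin 3) F} {a b c : Fin 3 → F}
    (hzero : MvPolynomial.aeval ![MvPolynomial.X 0, MvPolynomial.X 1,
      (0 : MvPolynomial (Fin 3) F)] (triG a b c g) = 0) :
    MvPolynomial.X 2 ∣ triG a b c g := by
  conv_rhs => rw [← MvPolynomial.support_sum_monomial_coeff (triG a b c g)]
  apply Finset.dvd_sum
  intro m hm
  rw [MvPolynomial.X_dvd_monomial]
  right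
  intro h2
  have := psi0_coeff (triG a b c g) h2
  rw [hzero, MvPolynomial.coeff_zero] at this
  exact (MvPolynomial.mem_support_iff.mp hm) this.symm

/-- linear substitution by a matrix -/
def subM (M : Matrix (Fin 3) (Fin 3) F) : MvPolynomial (Fin 3) F →ₐ[F] MvPolynomial (Fin 3) F :=
  MvPolynomial.aeval (fun i => ∑ j, MvPolynomial.C (M i j) * MvPolynomial.X j)

lemma subM_X (M : Matrix (Fin 3) (Fin 3) F) (i : Fin 3) :
    subM M (MvPolynomial.X i) = ∑ j, MvPolynomial.C (M i j) * MvPolynomial.X j := by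
  rw [subM, MvPolynomial.aeval_X]

lemma subM_subM (M N : Matrix (Fin 3) (Fin 3) F) (p : MvPolynomial (Fin 3) F) :
    subM M (subM N p) = subM (N * M) p := by
  have h := congrArg (fun ψ => ψ p) (MvPolynomial.comp_aeval
    (fun i => ∑ j, MvPolynomial.C (N i j) * MvPolynomial.X j) (subM M))
  simp only [AlgHom.comp_apply] at h
  have hfun : (fun i => subM M (∑ j, MvPolynomial.C (N i j) * MvPolynomial.X j))
      = fun i => ∑ k, MvPolynomial.C ((N * M) i k) * MvPolynomial.X k := by
    funext i
    rw [map_sum]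
    have hterm : ∀ j, subM M (MvPolynomial.C (N i j) * MvPolynomial.X j)
        = ∑ k, MvPolynomial.C (N i j * M j k) * MvPolynomial.X k := by
      intro j
      rw [map_mul, subM_X]
      have hC : subM M (MvPolynomial.C (N i j)) = MvPolynomial.C (N i j) := by
        simp [subM]
      rw [hC, Finset.mul_sum]
      apply Finset.sum_congr rfl
      intro k _
      rw [← mul_assoc, ← MvPolynomial.C_mul]
    rw [Finset.sum_congr rfl (fun j _ => hterm j), Finset.sum_comm]
    apply Finset.sum_congr rfl
    intro k _
    rw [← Finset.sum_mul, ← map_sum, Matrix.mul_apply]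
  rw [hfun] at h
  exact h

lemma subM_one (p : MvPolynomial (Fin 3) F) : subM 1 p = p := by
  have hfun : (fun i => ∑ j, MvPolynomial.C ((1 : Matrix (Fin 3) (Fin 3) F) i j)
      * MvPolynomial.X j) = (MvPolynomial.X : Fin 3 → MvPolynomial (Fin 3) F) := by
    funext i
    rw [Finset.sum_eq_single i]
    · simp [Matrix.one_apply]
    · intro j _ hj
      simp [Matrix.one_apply, Ne.symm hj]
    · intro hmem; exact absurd (Finset.mem_univ i) hmem
  rw [subM, hfun]
  exact MvPolynomial.aeval_X_left_apply p

lemma noline_factor {g : MvPolynomial (Fin 3) F} {d : ℕ} (hd : 1 ≤ d)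
    (hg : g.IsHomogeneous d) (hg0 : g ≠ 0) {a b : Fin 3 → F}
    (hab : LinearIndependent F ![a, b]) (hl : lineP a b g = 0) :
    ∃ L h : MvPolynomial (Fin 3) F, L.IsHomogeneous 1 ∧ h.IsHomogeneous (d-1) ∧
      L ≠ 0 ∧ h ≠ 0 ∧ g = L * h := by
  obtain ⟨c, habc⟩ := exists_extend_pair hab
  have hbin : binG a b g = 0 := binG_zero hg hl
  obtain ⟨H, hH⟩ := X2_dvd_triG (g := g) (a := a) (b := b) (c := c)
    (psi0_triG (c := c) hbin)
  set T : Matrix (Fin 3) (Fin 3) F := Matrix.of (fun i j => (![a, b, c]) j i) with hT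
  have hTdet : IsUnit T.det := by
    rw [isUnit_iff_ne_zero]
    intro hdet
    obtain ⟨v, hv0, hmul⟩ := Matrix.exists_mulVec_eq_zero_iff.mpr hdet
    have hcombo : v 0 • a + v 1 • b + v 2 • c = 0 := by
      funext i
      have := congrFun hmul i
      simp only [Matrix.mulVec, dotProduct, hT, Matrix.of_apply] at this
      rw [Fin.sum_univ_three] at this
      simpa [Pi.add_apply, Pi.smul_apply, smul_eq_mul, mul_comm] using this
    obtain ⟨h0, h1, h2⟩ := combo_eq_zero habc hcombo
    apply hv0
    funext i
    fin_cases i <;> assumption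
  have htri : triG a b c g = subM T g := by
    have hfun : (fun i => ∑ j, MvPolynomial.C (T i j) * MvPolynomial.X j)
        = fun i => (MvPolynomial.C (a i) * MvPolynomial.X 0
          + MvPolynomial.C (b i) * MvPolynomial.X 1
          + MvPolynomial.C (c i) * MvPolynomial.X 2 : MvPolynomial (Fin 3) F) := by
      funext i
      rw [Fin.sum_univ_three]
      simp [hT]
    rw [triG, subM, hfun]
  have hgeq : g = subM T⁻¹ (triG a b c g) := by
    rw [htri, subM_subM, Matrix.mul_nonsing_inv _ hTdet, subM_one]
  refine ⟨subM T⁻¹ (MvPolynomial.X 2), subM T⁻¹ H, ?_, ?_, ?_, ?_, ?_⟩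
  · rw [subM_X]
    exact linear_form_homog _
  · have hHhom : H.IsHomogeneous (d-1) := by
      apply hom_of_X_mul hd
      rw [← hH]
      exact triG_isHomogeneous hg a b c
    rw [subM]
    apply isHomogeneous_aeval hHhom
    intro i
    exact linear_form_homog _
  · intro hL0
    apply hg0
    rw [hgeq, hH, map_mul, hL0, zero_mul]
  · intro hh0
    apply hg0
    rw [hgeq, hH, map_mul, hh0, mul_zero]
  · rw [hgeq, hH, map_mul]

/-! ### Linear forms and lines -/

lemma linear_rep {L : MvPolynomial (Fin 3) F} (hL : L.IsHomogeneous 1) :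
    L = ∑ i, MvPolynomial.C (MvPolynomial.coeff (Finsupp.single i 1) L) * MvPolynomial.X i := by
  apply MvPolynomial.ext
  intro m
  rw [MvPolynomial.coeff_sum]
  have hterm : ∀ i, MvPolynomial.coeff m (MvPolynomial.C (MvPolynomial.coeff
      (Finsupp.single i 1) L) * MvPolynomial.X i)
      = if Finsupp.single i 1 = m then MvPolynomial.coeff (Finsupp.single i 1) L else 0 := by
    intro i
    rw [show (MvPolynomial.X i : MvPolynomial (Fin 3) F) = MvPolynomial.X i ^ 1 from (pow_one _).symm,
      MvPolynomial.X_pow_eq_monomial, MvPolynomial.C_mul_monomial, mul_one,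
      MvPolynomial.coeff_monomial]
  rw [Finset.sum_congr rfl (fun i _ => hterm i)]
  by_cases hm : ∃ i, m = Finsupp.single i 1
  · obtain ⟨i0, rfl⟩ := hm
    rw [Finset.sum_eq_single i0]
    · rw [if_pos rfl]
    · intro j _ hj
      rw [if_neg]
      intro hEq
      exact hj (by
        have := congrArg (fun (mm : Fin 3 →₀ ℕ) => mm j) hEq
        simp [Finsupp.single_apply] at this
        by_contra hne
        simp [Finsupp.single_apply, Ne.symm hne] at this)
    · intro hmem; exact absurd (Finset.mem_univ i0) hmem
  · push_neg at hm
    have hz : ∀ i ∈ Finset.univ, (if Finsupp.single i 1 = m then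
        MvPolynomial.coeff (Finsupp.single i 1) L else 0) = 0 := by
      intro i _
      rw [if_neg (fun hEq => hm i hEq.symm)]
    rw [Finset.sum_congr rfl hz, Finset.sum_const, smul_zero]
    by_contra hne
    have hsup : m ∈ L.support := MvPolynomial.mem_support_iff.mpr (fun h => hne (by rw [h]))
    have hsum := monomial_degree_eq hL hsup
    rw [Fin.sum_univ_three] at hsum
    have : m 0 = 1 ∧ m 1 = 0 ∧ m 2 = 0 ∨ m 0 = 0 ∧ m 1 = 1 ∧ m 2 = 0
        ∨ m 0 = 0 ∧ m 1 = 0 ∧ m 2 = 1 := by omega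
    rcases this with ⟨h0, h1, h2⟩ | ⟨h0, h1, h2⟩ | ⟨h0, h1, h2⟩
    · exact hm 0 (by ext i; fin_cases i <;> simp [Finsupp.single_apply, h0, h1, h2])
    · exact hm 1 (by ext i; fin_cases i <;> simp [Finsupp.single_apply, h0, h1, h2])
    · exact hm 2 (by ext i; fin_cases i <;> simp [Finsupp.single_apply, h0, h1, h2])

/-- the linear functional attached to a linear form -/
def lamOf (L : MvPolynomial (Fin 3) F) : (Fin 3 → F) →ₗ[F] F :=
  ∑ i, MvPolynomial.coeff (Finsupp.single i 1) L • LinearMap.proj i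

lemma lamOf_apply (L : MvPolynomial (Fin 3) F) (w : Fin 3 → F) :
    lamOf L w = ∑ i, MvPolynomial.coeff (Finsupp.single i 1) L * w i := by
  rw [lamOf, LinearMap.sum_apply]
  apply Finset.sum_congr rfl
  intro i _
  simp [LinearMap.proj]

lemma eval_eq_lamOf {L : MvPolynomial (Fin 3) F} (hL : L.IsHomogeneous 1) (w : Fin 3 → F) :
    MvPolynomial.eval w L = lamOf L w := by
  conv_lhs => rw [linear_rep hL]
  rw [lamOf_apply, map_sum]
  apply Finset.sum_congr rfl
  intro i _
  simp

lemma lamOf_ne_zero {L : MvPolynomial (Fin 3) F} (hL : L.IsHomogeneous 1) (h0 : L ≠ 0) :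
    lamOf L ≠ 0 := by
  have hex : ∃ i, MvPolynomial.coeff (Finsupp.single i 1) L ≠ 0 := by
    by_contra hall
    push_neg at hall
    apply h0
    rw [linear_rep hL]
    apply Finset.sum_eq_zero
    intro i _
    rw [hall i, map_zero, zero_mul]
  obtain ⟨i, hi⟩ := hex
  intro hlam
  apply hi
  have := congrArg (fun (φ : (Fin 3 → F) →ₗ[F] F) => φ (Pi.single i 1)) hlam
  simp only [LinearMap.zero_apply] at this
  rw [lamOf_apply, Finset.sum_eq_single i] at this
  · simpa using this
  · intro j _ hj
    simp [Pi.single_apply, Ne.symm hj]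
  · intro hmem; exact absurd (Finset.mem_univ i) hmem

lemma finrank_ker_two {K : Type} [Field K] {lam : (Fin 3 → K) →ₗ[K] K} (hlam : lam ≠ 0) :
    Module.finrank K (LinearMap.ker lam) = 2 := by
  have h3 : Module.finrank K (Fin 3 → K) = 3 := by simp
  have hrn := lam.finrank_range_add_finrank_ker
  rw [h3] at hrn
  have hr1 : Module.finrank K (LinearMap.range lam) = 1 := by
    have hle : Module.finrank K (LinearMap.range lam) ≤ 1 := by
      have := Submodule.finrank_le (LinearMap.range lam)
      simpa using this
    have hne : LinearMap.range lam ≠ ⊥ := by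
      intro hbot
      apply hlam
      apply LinearMap.ext
      intro w
      have : lam w ∈ LinearMap.range lam := LinearMap.mem_range_self _ w
      rw [hbot] at this
      simpa using this
    have hpos : 0 < Module.finrank K (LinearMap.range lam) := by
      rcases Nat.eq_zero_or_pos (Module.finrank K (LinearMap.range lam)) with h | h
      · exact absurd (Submodule.finrank_eq_zero.mp h) hne
      · exact h
    omega
  omega

lemma finrank_ker_lamOf {L : MvPolynomial (Fin 3) F} (hlam : lamOf L ≠ 0) :
    Module.finrank F (LinearMap.ker (lamOf L)) = 2 := finrank_ker_two hlam

section Assembly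
variable [Fintype F] [DecidableEq F]

lemma key_le {g : MvPolynomial (Fin 3) F} {d : ℕ} (hd : 3 ≤ d)
    (hg : g.IsHomogeneous d) (hNL : NoLine g) :
    (Zs g).ncard ≤ (d-1) * Fintype.card F + (d-2) := by
  have h1 := bound_main (by omega : 2 ≤ d) hg hNL
  have h2 := rigid hd hg hNL
  obtain ⟨P, hP⟩ : ∃ P, (d-1) * Fintype.card F = P := ⟨_, rfl⟩
  rw [hP] at h1 h2 ⊢
  omega

lemma mem_Zs_of_ker {L : MvPolynomial (Fin 3) F} (hL : L.IsHomogeneous 1)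
    {w : Fin 3 → F} (hw : w ≠ 0) (hker : w ∈ LinearMap.ker (lamOf L)) :
    Projectivization.mk F w hw ∈ Zs L := by
  rw [mem_Zs_iff hL, eval_eq_lamOf hL]
  exact hker

set_option synthInstance.maxHeartbeats 1000000 in
set_option maxHeartbeats 1000000 in
lemma line_ncard {L : MvPolynomial (Fin 3) F} (hL : L.IsHomogeneous 1) (h0 : L ≠ 0) :
    (Zs L).ncard ≤ Fintype.card F + 1 := by
  have hlam := lamOf_ne_zero hL h0
  have hK2 : Module.finrank F (LinearMap.ker (lamOf L)) = 2 := finrank_ker_lamOf hlam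
  have bK : Module.Basis (Fin 2) F (LinearMap.ker (lamOf L)) :=
    Module.finBasisOfFinrankEq F (LinearMap.ker (lamOf L)) hK2
  set u1 : Fin 3 → F := (bK 0).1 with hu1
  set u2 : Fin 3 → F := (bK 1).1 with hu2
  have hpair : ∀ s t : F, s • u1 + t • u2 = 0 → s = 0 ∧ t = 0 := by
    intro s t hst
    have hKel : s • bK 0 + t • bK 1 = (0 : LinearMap.ker (lamOf L)) := by
      apply Subtype.ext
      simpa [hu1, hu2] using hst
    have hli := Fintype.linearIndependent_iff.mp bK.linearIndependent ![s, t] (by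
      rw [Fin.sum_univ_two]
      simpa using hKel)
    exact ⟨hli 0, hli 1⟩
  have hu2ne : u2 ≠ 0 := by
    intro h
    have := hpair 0 1 (by rw [h]; simp)
    simpa using this.2
  have hu12ne : ∀ c : F, u1 + c • u2 ≠ 0 := by
    intro c h
    have := hpair 1 c (by simpa using h)
    simpa using this.1
  have hsub : Zs L ⊆ Set.range (fun o : Option F =>
      o.elim (Projectivization.mk F u2 hu2ne)
        (fun c => Projectivization.mk F (u1 + c • u2) (hu12ne c))) := by
    intro x hx
    have hker : x.rep ∈ LinearMap.ker (lamOf L) := by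
      rw [LinearMap.mem_ker, ← eval_eq_lamOf hL]
      exact hx
    have hrep := bK.sum_repr ⟨x.rep, hker⟩
    rw [Fin.sum_univ_two] at hrep
    set r0 := bK.repr ⟨x.rep, hker⟩ 0 with hr0
    set r1 := bK.repr ⟨x.rep, hker⟩ 1 with hr1
    have hrepv : r0 • u1 + r1 • u2 = x.rep := by
      have := congrArg (Subtype.val) hrep
      simpa [hu1, hu2] using this
    by_cases h0' : r0 = 0
    · refine ⟨none, ?_⟩
      have hr1ne : r1 ≠ 0 := by
        intro h1'
        apply Projectivization.rep_nonzero x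
        rw [← hrepv, h0', h1']
        simp
      show Projectivization.mk F u2 hu2ne = x
      rw [← Projectivization.mk_rep x, Projectivization.mk_eq_mk_iff]
      refine ⟨Units.mk0 r1⁻¹ (inv_ne_zero hr1ne), ?_⟩
      rw [Units.smul_def, Units.val_mk0, ← hrepv, h0']
      match_scalars <;> field_simp <;> ring
    · refine ⟨some (r1 / r0), ?_⟩
      show Projectivization.mk F (u1 + (r1/r0) • u2) (hu12ne _) = x
      rw [← Projectivization.mk_rep x, Projectivization.mk_eq_mk_iff]
      refine ⟨Units.mk0 r0⁻¹ (inv_ne_zero h0'), ?_⟩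
      rw [Units.smul_def, Units.val_mk0, ← hrepv]
      match_scalars <;> field_simp
  calc (Zs L).ncard ≤ (Set.range (fun o : Option F =>
      o.elim (Projectivization.mk F u2 hu2ne)
        (fun c => Projectivization.mk F (u1 + c • u2) (hu12ne c)))).ncard :=
        Set.ncard_le_ncard hsub (Set.toFinite _)
    _ ≤ (Set.univ : Set (Option F)).ncard := by
        rw [← Set.image_univ]
        exact Set.ncard_image_le (Set.toFinite _)
    _ = Fintype.card F + 1 := by
        rw [Set.ncard_univ, Nat.card_eq_fintype_card, Fintype.card_option]

lemma lines_meet {L1 L2 : MvPolynomial (Fin 3) F} (h1 : L1.IsHomogeneous 1) (h10 : L1 ≠ 0)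
    (h2 : L2.IsHomogeneous 1) (h20 : L2 ≠ 0) : (Zs L1 ∩ Zs L2).Nonempty := by
  have hK1 := finrank_ker_lamOf (lamOf_ne_zero h1 h10)
  have hK2 := finrank_ker_lamOf (lamOf_ne_zero h2 h20)
  have h3 : Module.finrank F (Fin 3 → F) = 3 := by simp
  have hsum := Submodule.finrank_sup_add_finrank_inf_eq
    (LinearMap.ker (lamOf L1)) (LinearMap.ker (lamOf L2))
  have hsup : Module.finrank F ↥(LinearMap.ker (lamOf L1) ⊔ LinearMap.ker (lamOf L2)) ≤ 3 := by
    have := Submodule.finrank_le (LinearMap.ker (lamOf L1) ⊔ LinearMap.ker (lamOf L2))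
    simpa [h3] using this
  have hinf : 0 < Module.finrank F ↥(LinearMap.ker (lamOf L1) ⊓ LinearMap.ker (lamOf L2)) := by
    omega
  have hnebot : LinearMap.ker (lamOf L1) ⊓ LinearMap.ker (lamOf L2) ≠ ⊥ := by
    intro hbot
    rw [hbot] at hinf
    simp at hinf
  obtain ⟨w, hwmem, hwne⟩ := Submodule.exists_mem_ne_zero_of_ne_bot hnebot
  exact ⟨Projectivization.mk F w hwne,
    mem_Zs_of_ker h1 hwne (Submodule.mem_inf.mp hwmem).1,
    mem_Zs_of_ker h2 hwne (Submodule.mem_inf.mp hwmem).2⟩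

omit [DecidableEq F] in
lemma Zs_mul (p q : MvPolynomial (Fin 3) F) : Zs (p * q) = Zs p ∪ Zs q := by
  ext x
  simp only [Zs, Set.mem_setOf_eq, Set.mem_union, map_mul]
  exact mul_eq_zero

lemma two_lines_ncard {L1 L2 : MvPolynomial (Fin 3) F} (h1 : L1.IsHomogeneous 1) (h10 : L1 ≠ 0)
    (h2 : L2.IsHomogeneous 1) (h20 : L2 ≠ 0) :
    (Zs L1 ∪ Zs L2).ncard ≤ 2 * Fintype.card F + 1 := by
  have hu := Set.ncard_union_add_ncard_inter (Zs L1) (Zs L2) (Set.toFinite _) (Set.toFinite _)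
  have hint : 1 ≤ (Zs L1 ∩ Zs L2).ncard := by
    rw [Nat.one_le_iff_ne_zero]
    intro h
    have := lines_meet h1 h10 h2 h20
    rw [← Set.ncard_pos (Set.toFinite _)] at this
    omega
  have hc1 := line_ncard h1 h10
  have hc2 := line_ncard h2 h20
  omega

end Assembly

section Final
variable {E : Type} [Field E] [Fintype E] [Algebra F E]

lemma aeval_linear_ne_zero [Fintype F] (q : ℕ) (hF : Fintype.card F = q)
    (v : Fin 3 → E)
    (hv : LinearIndependent E ![v, fun i => v i ^ q, fun i => v i ^ q ^ 2])
    {L : MvPolynomial (Fin 3) F} (hL : L.IsHomogeneous 1) (h0 : L ≠ 0) :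
    MvPolynomial.aeval v L ≠ 0 := by
  intro hzero
  have hqpos : 0 < q := by rw [← hF]; exact Fintype.card_pos
  set p := ringChar F with hp
  have hppos : p.Prime := CharP.char_is_prime F p
  haveI : Fact p.Prime := ⟨hppos⟩
  obtain ⟨n, hn⟩ := FiniteField.card F p
  haveI : CharP E p := charP_of_injective_algebraMap (algebraMap F E).injective p
  have hq_pow : q = p ^ (n : ℕ) := by rw [← hF, hn.2]
  have hadd : ∀ x y : E, (x + y) ^ q = x ^ q + y ^ q := by
    intro x y; rw [hq_pow]; exact add_pow_char_pow x y p (n : ℕ)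
  set ℓ : Fin 3 → E := fun i => algebraMap F E (MvPolynomial.coeff (Finsupp.single i 1) L) with hℓ
  have hconst : ∀ i, ℓ i ^ q = ℓ i := by
    intro i
    rw [hℓ]
    rw [← map_pow, ← hF, FiniteField.pow_card]
  have hS0 : ∑ i, ℓ i * v i = 0 := by
    rw [← hzero]
    conv_rhs => rw [linear_rep hL]
    rw [map_sum]
    apply Finset.sum_congr rfl
    intro i _
    simp [hℓ]
  have hpowsum : ∀ w : Fin 3 → E, (∑ i, ℓ i * w i) ^ q = ∑ i, ℓ i * (w i ^ q) := by
    intro w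
    rw [Fin.sum_univ_three, Fin.sum_univ_three, hadd, hadd]
    rw [mul_pow, mul_pow, mul_pow, hconst, hconst, hconst]
  have hS1 : ∑ i, ℓ i * (v i ^ q) = 0 := by
    rw [← hpowsum, hS0, zero_pow (by omega : q ≠ 0)]
  have hS2 : ∑ i, ℓ i * (v i ^ q ^ 2) = 0 := by
    have h := hpowsum (fun i => v i ^ q)
    rw [hS1, zero_pow (by omega : q ≠ 0)] at h
    have hstep : ∑ i, ℓ i * (v i ^ q ^ 2) = ∑ i, ℓ i * ((v i ^ q) ^ q) := by
      apply Finset.sum_congr rfl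
      intro i _
      rw [← pow_mul, ← sq]
    rw [hstep]
    exact h.symm
  set lam : (Fin 3 → E) →ₗ[E] E := ∑ i, ℓ i • LinearMap.proj i with hlam
  have hlamapp : ∀ w, lam w = ∑ i, ℓ i * w i := by
    intro w
    rw [hlam, LinearMap.sum_apply]
    apply Finset.sum_congr rfl
    intro i _
    simp [LinearMap.proj]
  have hlamne : lam ≠ 0 := by
    have hex : ∃ i, MvPolynomial.coeff (Finsupp.single i 1) L ≠ 0 := by
      by_contra hall
      push_neg at hall
      apply h0
      rw [linear_rep hL]
      apply Finset.sum_eq_zero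
      intro i _
      rw [hall i, map_zero, zero_mul]
    obtain ⟨i, hi⟩ := hex
    intro hl0
    have := congrArg (fun (φ : (Fin 3 → E) →ₗ[E] E) => φ (Pi.single i 1)) hl0
    simp only [LinearMap.zero_apply] at this
    rw [hlamapp, Finset.sum_eq_single i] at this
    · rw [Pi.single_eq_same, mul_one] at this
      apply hi
      apply (algebraMap F E).injective
      rw [map_zero]
      simpa [hℓ] using this
    · intro j _ hj
      simp [Pi.single_apply, Ne.symm hj]
    · intro hmem; exact absurd (Finset.mem_univ i) hmem
  have hker : ∀ j, (![v, fun i => v i ^ q, fun i => v i ^ q ^ 2]) j ∈ LinearMap.ker lam := by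
    intro j
    fin_cases j
    · rw [LinearMap.mem_ker]
      show lam v = 0
      rw [hlamapp]; exact hS0
    · rw [LinearMap.mem_ker]
      show lam (fun i => v i ^ q) = 0
      rw [hlamapp]; exact hS1
    · rw [LinearMap.mem_ker]
      show lam (fun i => v i ^ q ^ 2) = 0
      rw [hlamapp]; exact hS2
  have hrank : Module.finrank E (LinearMap.ker lam) = 2 := finrank_ker_two hlamne
  have hspan : Submodule.span E (Set.range ![v, fun i => v i ^ q, fun i => v i ^ q ^ 2])
      ≤ LinearMap.ker lam :=
    Submodule.span_le.mpr (Set.range_subset_iff.mpr hker)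
  have h3 := finrank_span_eq_card hv
  have hle := Submodule.finrank_mono hspan
  rw [h3, hrank] at hle
  simp at hle

end Final
end Stmt13

open Stmt13 in
/-- For `q ≥ 4`, a plane quartic over `F_q` passing through a degree-3 closed point not on
any `F_q`-rational line has at most `3q + 2` rational points. -/
theorem stmt_13 (q : ℕ) (hq : IsPrimePow q) (hq4 : 4 ≤ q)
    (F E : Type) [Field F] [Fintype F] [Field E] [Fintype E] [Algebra F E]
    (hF : Fintype.card F = q) (hE : Fintype.card E = q ^ 3)
    -- `v` represents a degree-3 closed point of `P²`: its three Frobenius conjugates are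
    -- pairwise distinct and non-collinear (equivalently, linearly independent).
    (v : Fin 3 → E)
    (hv : LinearIndependent E ![v, fun i => v i ^ q, fun i => v i ^ q ^ 2]) :
    ∀ f : MvPolynomial (Fin 3) F, f ≠ 0 → f.IsHomogeneous 4 →
      MvPolynomial.aeval v f = 0 →
      {x : Projectivization F (Fin 3 → F) | MvPolynomial.eval x.rep f = 0}.ncard ≤ 3 * q + 2 := by
  intro f hf0 hf4 hfv
  letI : DecidableEq F := Classical.decEq F
  have hLne : ∀ L : MvPolynomial (Fin 3) F, L.IsHomogeneous 1 → L ≠ 0 →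
      MvPolynomial.aeval v L ≠ 0 :=
    fun L hL h0 => aeval_linear_ne_zero q hF v hv hL h0
  show (Zs f).ncard ≤ 3 * q + 2
  rw [← hF]
  by_cases h4 : NoLine f
  · have h := key_le (by norm_num : 3 ≤ 4) hf4 h4
    norm_num at h
    exact h
  · rw [NoLine] at h4; push_neg at h4
    obtain ⟨a, b, hab, hl⟩ := h4
    obtain ⟨L1, g3, hL1h, hg3h, hL10, hg30, hfeq⟩ :=
      noline_factor (by norm_num : 1 ≤ 4) hf4 hf0 hab hl
    have hg3h' : g3.IsHomogeneous 3 := by simpa using hg3h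
    have hg3v : MvPolynomial.aeval v g3 = 0 := by
      have h := hfv
      rw [hfeq, map_mul] at h
      rcases mul_eq_zero.mp h with h' | h'
      · exact absurd h' (hLne L1 hL1h hL10)
      · exact h'
    rw [hfeq, Zs_mul]
    by_cases h3 : NoLine g3
    · have hb3 := key_le (le_refl 3) hg3h' h3
      norm_num at hb3
      have hline := line_ncard hL1h hL10
      have hun := Set.ncard_union_le (Zs L1) (Zs g3)
      omega
    · rw [NoLine] at h3; push_neg at h3
      obtain ⟨a2, b2, hab2, hl2⟩ := h3
      obtain ⟨L2, g2, hL2h, hg2h, hL20, hg20, hg3eq⟩ :=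
        noline_factor (by norm_num : 1 ≤ 3) hg3h' hg30 hab2 hl2
      have hg2h' : g2.IsHomogeneous 2 := by simpa using hg2h
      have hg2v : MvPolynomial.aeval v g2 = 0 := by
        have h := hg3v
        rw [hg3eq, map_mul] at h
        rcases mul_eq_zero.mp h with h' | h'
        · exact absurd h' (hLne L2 hL2h hL20)
        · exact h'
      rw [hg3eq, Zs_mul, ← Set.union_assoc]
      by_cases h2 : NoLine g2
      · have hb2 := bound_main (le_refl 2) hg2h' h2
        norm_num at hb2
        have htwo := two_lines_ncard hL1h hL10 hL2h hL20
        have hun := Set.ncard_union_le (Zs L1 ∪ Zs L2) (Zs g2)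
        omega
      · rw [NoLine] at h2; push_neg at h2
        obtain ⟨a1, b1, hab1, hl1⟩ := h2
        obtain ⟨L3, g1, hL3h, hg1h, hL30, hg10, hg2eq⟩ :=
          noline_factor (by norm_num : 1 ≤ 2) hg2h' hg20 hab1 hl1
        have hg1h' : g1.IsHomogeneous 1 := by simpa using hg1h
        exfalso
        have h := hg2v
        rw [hg2eq, map_mul] at h
        rcases mul_eq_zero.mp h with h' | h'
        · exact hLne L3 hL3h hL30 h'
        · exact hLne g1 hg1h' hg10 h'
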